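/- Let $n\ge 1$ be an integer and $\zeta = e^{2\pi i/n}$, and let $c_u$ for $0\le u\le n^2-1$ denote the aperiodic autocorrelations of the coefficient sequence of $h_n$. Then for all integers $u, v$ with $0\le u < n$, $0 < v < n$ (equivalently $(u,v)\ne(0,0)$ with $v\ne 0$), one has $c_{nu+v} = -\zeta^v\, c_{nu+n-v}$, where when $nu + n - v > n^2 - 1$ (i.e., $u = n-1$) this is interpreted with $c_w = 0$ for $w \ge n^2$. -/

import Mathlib

/-- The coefficients of `h_n`: `b_{nj+k} = ζ^{jk}` with `ζ = e^{2πi/n}`, for `0 ≤ j,k < n`;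
here `j = m / n` and `k = m % n` for an index `m = nj + k`. -/
noncomputable def hCoef (n : ℕ) (m : ℕ) : ℂ :=
  Complex.exp (2 * Real.pi * Complex.I / n) ^ ((m / n) * (m % n))

/-- The aperiodic autocorrelations `c_u = ∑_{0 ≤ m, m+u < n²} b_m conj(b_{m+u})` of the
coefficient sequence of `h_n`; note that this is automatically `0` for `u ≥ n²`, since the
range of summation is then empty. -/
noncomputable def hCorr (n : ℕ) (u : ℕ) : ℂ :=
  ∑ m ∈ Finset.range (n ^ 2 - u), hCoef n m * (starRingEnd ℂ) (hCoef n (m + u))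

private lemma sum_range_nmul_add {M : Type*} [AddCommMonoid M] (n : ℕ) (f : ℕ → M) :
    ∀ q r : ℕ, ∑ m ∈ Finset.range (n * q + r), f m =
      (∑ j ∈ Finset.range q, ∑ k ∈ Finset.range n, f (n * j + k)) +
        ∑ k ∈ Finset.range r, f (n * q + k) := by
  intro q
  induction q with
  | zero => intro r; simp
  | succ q ih =>
    intro r
    have h : n * (q + 1) + r = n * q + (n + r) := by ring
    rw [h, ih (n + r), Finset.sum_range_add, Finset.sum_range_succ, add_assoc]
    congr 1
    congr 1
    apply Finset.sum_congr rfl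
    intro k _
    congr 1
    ring

/-- For `0 ≤ u < n` and `0 < v < n`, one has `c_{nu+v} = -ζ^v c_{nu+n-v}`. -/
theorem hCorr_symmetry (n : ℕ) (hn : 1 ≤ n) (u v : ℕ) (hu : u < n) (hv1 : 0 < v) (hv2 : v < n) :
    hCorr n (n * u + v) =
      -(Complex.exp (2 * Real.pi * Complex.I / n)) ^ v * hCorr n (n * u + (n - v)) := by
  have hn0 : n ≠ 0 := by omega
  set ζ : ℂ := Complex.exp (2 * Real.pi * Complex.I / n) with hζdef
  have hprim : IsPrimitiveRoot ζ n := Complex.isPrimitiveRoot_exp n hn0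
  have hζ0 : ζ ≠ 0 := Complex.exp_ne_zero _
  have hconj : (starRingEnd ℂ) ζ = ζ⁻¹ := by
    rw [hζdef, ← Complex.exp_conj, ← Complex.exp_neg]
    congr 1
    simp only [map_div₀, map_mul, Complex.conj_I, map_natCast, map_ofNat, Complex.conj_ofReal]
    ring
  have hconjpow : ∀ m : ℕ, (starRingEnd ℂ) (ζ ^ m) = ζ ^ (-(m : ℤ)) := by
    intro m
    rw [map_pow, hconj, inv_pow, ← zpow_natCast ζ m, ← zpow_neg]
  have zp : ∀ a b : ℤ, (n : ℤ) ∣ a - b → ζ ^ a = ζ ^ b := by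
    intro a b hd
    have h1 : ζ ^ (a - b) = 1 := (hprim.zpow_eq_one_iff_dvd _).mpr hd
    calc ζ ^ a = ζ ^ (b + (a - b)) := by congr 1; ring
    _ = ζ ^ b * ζ ^ (a - b) := zpow_add₀ hζ0 _ _
    _ = ζ ^ b := by rw [h1, mul_one]
  have geomzero : ∀ t : ℕ, 0 < t → t < n →
      ∑ k ∈ Finset.range n, (ζ ^ (-(t : ℤ))) ^ k = 0 := by
    intro t ht1 ht2
    have hx1 : ζ ^ (-(t : ℤ)) ≠ 1 := by
      intro h
      apply hprim.pow_ne_one_of_pos_of_lt ht1.ne' ht2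
      have h2 : (ζ ^ (-(t : ℤ)))⁻¹ = 1⁻¹ := by rw [h]
      rw [← zpow_neg, neg_neg, inv_one, zpow_natCast] at h2
      exact h2
    have hxn : (ζ ^ (-(t : ℤ))) ^ n = 1 := by
      rw [← zpow_natCast, ← zpow_mul]
      exact (hprim.zpow_eq_one_iff_dvd _).mpr ⟨-t, by ring⟩
    have hg := geom_sum_mul (ζ ^ (-(t : ℤ))) n
    rw [hxn, sub_self] at hg
    exact (mul_eq_zero.mp hg).resolve_right (sub_ne_zero.mpr hx1)
  obtain ⟨q, hqn⟩ : ∃ q, n = u + 1 + q := ⟨n - u - 1, by omega⟩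
  obtain ⟨w, hwn⟩ : ∃ w, n = v + w := ⟨n - v, by omega⟩
  have hqz : (u : ℤ) + 1 + (q : ℤ) = (n : ℤ) := by exact_mod_cast congrArg (Nat.cast : ℕ → ℤ) hqn.symm
  have hwz : (v : ℤ) + (w : ℤ) = (n : ℤ) := by exact_mod_cast congrArg (Nat.cast : ℕ → ℤ) hwn.symm
  have hsub : n - v = w := by omega
  have h2 : n ^ 2 = n * u + v + (n * q + w) := by
    calc n ^ 2 = n * (u + 1 + q) := by rw [← hqn, pow_two]
    _ = n * u + n + n * q := by ring
    _ = n * u + v + (n * q + w) := by omega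
  have e1 : n ^ 2 - (n * u + v) = n * q + w := by omega
  have e2 : n ^ 2 - (n * u + w) = n * q + v := by omega
  have hrange : Finset.range n = Finset.range (w + v) := by rw [show w + v = n by omega]
  have hcoef : ∀ j k : ℕ, k < n → hCoef n (n * j + k) = ζ ^ (j * k) := by
    intro j k hk
    unfold hCoef
    rw [← hζdef, Nat.mul_add_div (by omega), Nat.div_eq_of_lt hk, Nat.mul_add_mod,
      Nat.mod_eq_of_lt hk, add_zero]
  have termval : ∀ j k j' k' : ℕ, k < n → k' < n →
      hCoef n (n * j + k) * (starRingEnd ℂ) (hCoef n (n * j' + k')) =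
        ζ ^ ((j * k : ℤ) - (j' * k' : ℤ)) := by
    intro j k j' k' hk hk'
    rw [hcoef j k hk, hcoef j' k' hk', hconjpow, ← zpow_natCast ζ (j * k), ← zpow_add₀ hζ0]
    push_cast
    rw [sub_eq_add_neg]
  -- abbreviations
  set a : ℂ := ζ ^ ((v : ℤ)) with ha
  set b : ℂ := ζ ^ ((u : ℤ) * v) with hb
  set b' : ℂ := ζ ^ (-(u : ℤ) * v) with hb'
  set c : ℂ := ζ ^ (-(v : ℤ)) with hc
  set P : ℂ := ∑ k ∈ Finset.range w, ζ ^ (-(u : ℤ) * k) with hP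
  set Q : ℂ := ∑ k ∈ Finset.range v, ζ ^ (-((u : ℤ) + 1) * k) with hQ
  set R : ℂ := ∑ k ∈ Finset.range v, ζ ^ (-(u : ℤ) * k) with hR
  set S : ℂ := ∑ k ∈ Finset.range w, ζ ^ (-((u : ℤ) + 1) * k) with hS
  set B : ℂ := ∑ j ∈ Finset.range q, a ^ j with hB
  -- term lemmas
  have term1a : ∀ j k : ℕ, k < w →
      hCoef n (n * j + k) * (starRingEnd ℂ) (hCoef n (n * j + k + (n * u + v))) =
        ζ ^ (-(j : ℤ) * v) * (b' * ζ ^ (-(u : ℤ) * k)) := by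
    intro j k hk
    have hidx : n * j + k + (n * u + v) = n * (j + u) + (k + v) := by ring
    rw [hidx, termval j k (j + u) (k + v) (by omega) (by omega), hb',
      ← zpow_add₀ hζ0, ← zpow_add₀ hζ0]
    congr 1
    push_cast
    ring
  have term1b : ∀ j k : ℕ, k < v →
      hCoef n (n * j + (w + k)) * (starRingEnd ℂ) (hCoef n (n * j + (w + k) + (n * u + v))) =
        ζ ^ (-(j : ℤ) * v) * ζ ^ (-((u : ℤ) + 1) * k) := by
    intro j k hk
    have hidx : n * j + (w + k) + (n * u + v) = n * (j + u + 1) + k := by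
      calc n * j + (w + k) + (n * u + v) = n * j + n * u + (v + w) + k := by ring
      _ = n * (j + u + 1) + k := by rw [hwn]; ring
    rw [hidx, termval j (w + k) (j + u + 1) k (by omega) (by omega), ← zpow_add₀ hζ0]
    refine zp _ _ ⟨j, ?_⟩
    push_cast
    linear_combination (j : ℤ) * hwz
  have term2a : ∀ j k : ℕ, k < v →
      hCoef n (n * j + k) * (starRingEnd ℂ) (hCoef n (n * j + k + (n * u + w))) =
        ζ ^ ((j : ℤ) * v) * (b * ζ ^ (-(u : ℤ) * k)) := by
    intro j k hk
    have hidx : n * j + k + (n * u + w) = n * (j + u) + (k + w) := by ring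
    rw [hidx, termval j k (j + u) (k + w) (by omega) (by omega), hb,
      ← zpow_add₀ hζ0, ← zpow_add₀ hζ0]
    refine zp _ _ ⟨-(j : ℤ) - u, ?_⟩
    push_cast
    linear_combination (-(j : ℤ) - u) * hwz
  have term2b : ∀ j k : ℕ, k < w →
      hCoef n (n * j + (v + k)) * (starRingEnd ℂ) (hCoef n (n * j + (v + k) + (n * u + w))) =
        ζ ^ ((j : ℤ) * v) * ζ ^ (-((u : ℤ) + 1) * k) := by
    intro j k hk
    have hidx : n * j + (v + k) + (n * u + w) = n * (j + u + 1) + k := by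
      calc n * j + (v + k) + (n * u + w) = n * j + n * u + (v + w) + k := by ring
      _ = n * (j + u + 1) + k := by rw [hwn]; ring
    rw [hidx, termval j (v + k) (j + u + 1) k (by omega) (by omega), ← zpow_add₀ hζ0]
    congr 1
    push_cast
    ring
  -- pointwise zpow facts
  have hav : ζ ^ v = a := by rw [ha, zpow_natCast]
  have hbb' : b * b' = 1 := by
    rw [hb, hb', ← zpow_add₀ hζ0, show (u : ℤ) * v + -(u : ℤ) * v = 0 by ring, zpow_zero]
  have hac : a * c = 1 := by
    rw [ha, hc, ← zpow_add₀ hζ0, show ((v : ℤ)) + -(v : ℤ) = 0 by ring, zpow_zero]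
  have hajv : ∀ j : ℕ, a ^ j = ζ ^ ((v : ℤ) * j) := by
    intro j
    rw [ha, ← zpow_natCast (ζ ^ ((v : ℤ))) j, ← zpow_mul]
  -- row computations for c1
  have hrow1 : ∀ j : ℕ,
      (∑ k ∈ Finset.range n,
        hCoef n (n * j + k) * (starRingEnd ℂ) (hCoef n (n * j + k + (n * u + v)))) =
        ζ ^ (-(j : ℤ) * v) * (b' * P + Q) := by
    intro j
    rw [hrange, Finset.sum_range_add]
    have e1' : ∑ k ∈ Finset.range w,
        hCoef n (n * j + k) * (starRingEnd ℂ) (hCoef n (n * j + k + (n * u + v))) =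
        ζ ^ (-(j : ℤ) * v) * (b' * P) := by
      rw [Finset.sum_congr rfl fun k hk => term1a j k (Finset.mem_range.mp hk), hP,
        Finset.mul_sum, Finset.mul_sum]
    have e2' : ∑ k ∈ Finset.range v,
        hCoef n (n * j + (w + k)) * (starRingEnd ℂ) (hCoef n (n * j + (w + k) + (n * u + v))) =
        ζ ^ (-(j : ℤ) * v) * Q := by
      rw [Finset.sum_congr rfl fun k hk => term1b j k (Finset.mem_range.mp hk), hQ,
        Finset.mul_sum]
    rw [e1', e2', mul_add]
  have hrow2 : ∀ j : ℕ,
      (∑ k ∈ Finset.range n,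
        hCoef n (n * j + k) * (starRingEnd ℂ) (hCoef n (n * j + k + (n * u + w)))) =
        ζ ^ ((j : ℤ) * v) * (b * R + S) := by
    intro j
    rw [show Finset.range n = Finset.range (v + w) by rw [← hwn], Finset.sum_range_add]
    have e1' : ∑ k ∈ Finset.range v,
        hCoef n (n * j + k) * (starRingEnd ℂ) (hCoef n (n * j + k + (n * u + w))) =
        ζ ^ ((j : ℤ) * v) * (b * R) := by
      rw [Finset.sum_congr rfl fun k hk => term2a j k (Finset.mem_range.mp hk), hR,
        Finset.mul_sum, Finset.mul_sum]
    have e2' : ∑ k ∈ Finset.range w,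
        hCoef n (n * j + (v + k)) * (starRingEnd ℂ) (hCoef n (n * j + (v + k) + (n * u + w))) =
        ζ ^ ((j : ℤ) * v) * S := by
      rw [Finset.sum_congr rfl fun k hk => term2b j k (Finset.mem_range.mp hk), hS,
        Finset.mul_sum]
    rw [e1', e2', mul_add]
  -- sum over j of the reflected coefficients
  have hBrefl : ∑ j ∈ Finset.range q, ζ ^ (-(j : ℤ) * v) = a * a * b * B := by
    rw [← Finset.sum_range_reflect, hB, Finset.mul_sum]
    apply Finset.sum_congr rfl
    intro j hj
    have hj' : j < q := Finset.mem_range.mp hj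
    have hcast : ((q - 1 - j : ℕ) : ℤ) = (q : ℤ) - 1 - j := by omega
    rw [hcast]
    have : a * a * b * a ^ j = ζ ^ ((v : ℤ) + v + (u : ℤ) * v + (v : ℤ) * j) := by
      rw [hajv j, ha, hb, ← zpow_add₀ hζ0, ← zpow_add₀ hζ0, ← zpow_add₀ hζ0]
    rw [this]
    refine zp _ _ ⟨-(v : ℤ), ?_⟩
    linear_combination (-(v : ℤ)) * hqz
  have hBsum : ∑ j ∈ Finset.range q, ζ ^ ((j : ℤ) * v) = B := by
    rw [hB]
    apply Finset.sum_congr rfl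
    intro j _
    rw [hajv j]
    congr 1
    ring
  -- partial row coefficients
  have hpc1 : ζ ^ (-(q : ℤ) * v) * b' = a := by
    rw [hb', ha, ← zpow_add₀ hζ0]
    refine zp _ _ ⟨-(v : ℤ), ?_⟩
    linear_combination (-(v : ℤ)) * hqz
  have hpc2 : ζ ^ ((q : ℤ) * v) * b = c := by
    rw [hb, hc, ← zpow_add₀ hζ0]
    refine zp _ _ ⟨(v : ℤ), ?_⟩
    linear_combination (v : ℤ) * hqz
  -- main sum computations
  have hc1 : hCorr n (n * u + v) = a * a * b * B * (b' * P + Q) + a * P := by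
    unfold hCorr
    rw [e1, sum_range_nmul_add]
    congr 1
    · rw [Finset.sum_congr rfl fun j _ => hrow1 j, ← Finset.sum_mul, hBrefl]
    · rw [Finset.sum_congr rfl fun k hk => term1a q k (Finset.mem_range.mp hk), hP,
        Finset.mul_sum]
      apply Finset.sum_congr rfl
      intro k _
      rw [← mul_assoc, hpc1]
  have hc2 : hCorr n (n * u + w) = B * (b * R + S) + c * R := by
    unfold hCorr
    rw [e2, sum_range_nmul_add]
    congr 1
    · rw [Finset.sum_congr rfl fun j _ => hrow2 j, ← Finset.sum_mul, hBsum]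
    · rw [Finset.sum_congr rfl fun k hk => term2a q k (Finset.mem_range.mp hk), hR,
        Finset.mul_sum]
      apply Finset.sum_congr rfl
      intro k _
      rw [← mul_assoc, hpc2]
  -- the three key identities
  have hGu : P + b * R = ∑ k ∈ Finset.range n, (ζ ^ (-(u : ℤ))) ^ k := by
    rw [hrange, Finset.sum_range_add, hP, hR, Finset.mul_sum]
    congr 1
    · apply Finset.sum_congr rfl
      intro k _
      rw [← zpow_natCast (ζ ^ (-(u : ℤ))) k, ← zpow_mul]
    · apply Finset.sum_congr rfl
      intro k _
      rw [hb, ← zpow_add₀ hζ0, ← zpow_natCast (ζ ^ (-(u : ℤ))) (w + k), ← zpow_mul]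
      refine (zp _ _ ⟨-(u : ℤ), ?_⟩).symm
      push_cast
      linear_combination (-(u : ℤ)) * hwz
  have hGu1 : S + a * b * Q = ∑ k ∈ Finset.range n, (ζ ^ (-((u : ℤ) + 1))) ^ k := by
    rw [hrange, Finset.sum_range_add, hS, hQ, Finset.mul_sum]
    congr 1
    · apply Finset.sum_congr rfl
      intro k _
      rw [← zpow_natCast (ζ ^ (-((u : ℤ) + 1))) k, ← zpow_mul]
    · apply Finset.sum_congr rfl
      intro k _
      rw [ha, hb, ← zpow_add₀ hζ0, ← zpow_add₀ hζ0,
        ← zpow_natCast (ζ ^ (-((u : ℤ) + 1))) (w + k), ← zpow_mul]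
      refine (zp _ _ ⟨-(u : ℤ) - 1, ?_⟩).symm
      push_cast
      linear_combination (-(u : ℤ) - 1) * hwz
  have han : a ^ n = 1 := by
    rw [ha, ← zpow_natCast (ζ ^ ((v : ℤ))) n, ← zpow_mul]
    exact (hprim.zpow_eq_one_iff_dvd _).mpr ⟨v, by ring⟩
  have h1 : (P + b * R) * (a * a * B + a) = 0 := by
    rcases Nat.eq_zero_or_pos u with hu0 | hu0
    · apply mul_eq_zero_of_right
      have ha1 : a ≠ 1 := by
        rw [ha, zpow_natCast]
        exact hprim.pow_ne_one_of_pos_of_lt hv1.ne' hv2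
      have hfull : ∑ j ∈ Finset.range n, a ^ j = 0 := by
        have hg := geom_sum_mul a n
        rw [han, sub_self] at hg
        exact (mul_eq_zero.mp hg).resolve_right (sub_ne_zero.mpr ha1)
      have hnq : n = q + 1 := by omega
      rw [hnq, Finset.sum_range_succ, ← hB] at hfull
      have hBq : B = -a ^ q := by linear_combination hfull
      have haq1 : a * (a * a ^ q) = a * a ^ n := by rw [hnq]; ring
      calc a * a * B + a = -(a * (a * a ^ q)) + a := by rw [hBq]; ring
      _ = -(a * a ^ n) + a := by rw [haq1]
      _ = 0 := by rw [han]; ring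
    · apply mul_eq_zero_of_left
      rw [hGu]
      exact geomzero u hu0 hu
  have h2' : B * (S + a * b * Q) = 0 := by
    rcases Nat.eq_zero_or_pos q with hq0 | hq0
    · apply mul_eq_zero_of_left
      rw [hB, hq0]
      simp
    · apply mul_eq_zero_of_right
      rw [hGu1]
      have hcst : ((u + 1 : ℕ) : ℤ) = (u : ℤ) + 1 := by push_cast; ring
      rw [← hcst]
      exact geomzero (u + 1) (by omega) (by omega)
  have hBg : B * (a - 1) * (a * b) = 1 - a * b := by
    have hg := geom_sum_mul a q
    rw [← hB] at hg
    have haqab : a ^ q * (a * b) = 1 := by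
      rw [ha, hb, ← zpow_natCast (ζ ^ ((v : ℤ))) q, ← zpow_mul, ← zpow_add₀ hζ0,
        ← zpow_add₀ hζ0]
      exact (hprim.zpow_eq_one_iff_dvd _).mpr ⟨v, by linear_combination (v : ℤ) * hqz⟩
    calc B * (a - 1) * (a * b) = (a ^ q - 1) * (a * b) := by rw [hg]
    _ = a ^ q * (a * b) - a * b := by ring
    _ = 1 - a * b := by rw [haqab]
  rw [hsub, hc1, hc2, hav]
  linear_combination h1 + a * h2' + a * a * B * P * hbb' - R * hBg + R * hac
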